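/- arXiv:2201.12995 — 5 statements merged into one kernel-verified Lean document; each statement's English description precedes it below -/
import Mathlib

section
/- Let U and V be real Hilbert spaces and let a : U × V → ℝ be a bounded bilinear form with |a(u,v)| ≤ M‖u‖_U‖v‖_V for all u, v. Suppose there is a constant β > 0 such that (i) for every u ∈ U, sup over nonzero v ∈ V of a(u,v)/‖v‖_V is at least β‖u‖_U, and (ii) for every v ∈ V, sup over nonzero u ∈ U of a(u,v)/‖u‖_U is at least β‖v‖_V. Then for every bounded linear functional l : V → ℝ there exists a unique u ∈ U such that a(u,v) = l(v) for all v ∈ V. (Babuška existence–uniqueness theorem, sufficiency direction, problem (2.6).) -/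
open scoped RealInnerProductSpace


/-- **Babuška existence–uniqueness theorem (sufficiency direction).**
Let `U`, `V` be real Hilbert spaces and `a : U × V → ℝ` a bounded bilinear form
with `|a u v| ≤ M * ‖u‖ * ‖v‖`.  If there is `β > 0` such that both inf-sup
conditions hold, then for every bounded linear functional `l : V → ℝ` there is
a unique `u ∈ U` with `a u v = l v` for all `v ∈ V`. -/
theorem babuska_existence_uniqueness
    {U V : Type*}
    [NormedAddCommGroup U] [InnerProductSpace ℝ U] [CompleteSpace U]
    [NormedAddCommGroup V] [InnerProductSpace ℝ V] [CompleteSpace V]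
    (a : U →ₗ[ℝ] V →ₗ[ℝ] ℝ) (M : ℝ) (hM : 0 < M)
    (hbdd : ∀ (u : U) (v : V), |a u v| ≤ M * ‖u‖ * ‖v‖)
    (β : ℝ) (hβ : 0 < β)
    (hinfsup₁ : ∀ u : U,
      β * ‖u‖ ≤ ⨆ v : {v : V // v ≠ 0}, a u (v : V) / ‖(v : V)‖)
    (hinfsup₂ : ∀ v : V,
      β * ‖v‖ ≤ ⨆ u : {u : U // u ≠ 0}, a (u : U) v / ‖(u : U)‖)
    (l : V →L[ℝ] ℝ) :
    ∃! u : U, ∀ v : V, a u v = l v := by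
  classical
  -- bundle `a u` as a continuous linear functional
  set A : U → (V →L[ℝ] ℝ) := fun u =>
    LinearMap.mkContinuous (a u) (M * ‖u‖) (fun v => by
      simpa [Real.norm_eq_abs] using hbdd u v) with hA
  have hA_apply : ∀ u v, A u v = a u v := fun u v => rfl
  -- the Riesz representation operator
  set T₀ : U →ₗ[ℝ] V :=
    { toFun := fun u => (InnerProductSpace.toDual ℝ V).symm (A u)
      map_add' := fun u u' => by
        have h : A (u + u') = A u + A u' := by
          ext v; simp [hA_apply, map_add]
        show (InnerProductSpace.toDual ℝ V).symm (A (u + u')) =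
          (InnerProductSpace.toDual ℝ V).symm (A u) + (InnerProductSpace.toDual ℝ V).symm (A u')
        rw [h, map_add]
      map_smul' := fun r u => by
        have h : A (r • u) = r • A u := by
          ext v; simp [hA_apply, map_smul]
        show (InnerProductSpace.toDual ℝ V).symm (A (r • u)) =
          r • (InnerProductSpace.toDual ℝ V).symm (A u)
        rw [h, LinearIsometryEquiv.map_smulₛₗ]
        simp } with hT₀
  have hT₀_norm : ∀ u, ‖T₀ u‖ ≤ M * ‖u‖ := by
    intro u
    have h1 : ‖(InnerProductSpace.toDual ℝ V).symm (A u)‖ = ‖A u‖ :=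
      LinearIsometryEquiv.norm_map _ _
    have h2 : ‖A u‖ ≤ M * ‖u‖ :=
      ContinuousLinearMap.opNorm_le_bound _
        (mul_nonneg hM.le (norm_nonneg _)) (fun v => by
          simpa [hA_apply, Real.norm_eq_abs] using hbdd u v)
    calc ‖T₀ u‖ = ‖A u‖ := h1
      _ ≤ M * ‖u‖ := h2
  set T : U →L[ℝ] V := T₀.mkContinuous M hT₀_norm with hT
  have hTa : ∀ (u : U) (v : V), (inner ℝ (T u) v : ℝ) = a u v := by
    intro u v
    show (inner ℝ ((InnerProductSpace.toDual ℝ V).symm (A u)) v : ℝ) = a u v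
    rw [InnerProductSpace.toDual_symm_apply]
    exact hA_apply u v
  -- lower bound: β ‖u‖ ≤ ‖T u‖
  have hlow : ∀ u, β * ‖u‖ ≤ ‖T u‖ := by
    intro u
    refine le_trans (hinfsup₁ u) (Real.iSup_le ?_ (norm_nonneg _))
    rintro ⟨v, hv⟩
    rw [← hTa]
    rw [div_le_iff₀ (norm_pos_iff.2 hv)]
    exact real_inner_le_norm _ _
  -- antilipschitz
  have h_anti : AntilipschitzWith (⟨β, hβ.le⟩ : NNReal)⁻¹ T := by
    refine ContinuousLinearMap.antilipschitz_of_bound T (fun x => ?_)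
    have h := hlow x
    have hc : (((⟨β, hβ.le⟩ : NNReal)⁻¹ : NNReal) : ℝ) = β⁻¹ := NNReal.coe_inv _
    rw [hc, ← div_eq_inv_mul, le_div_iff₀ hβ]
    linarith
  have hinj : Function.Injective T := h_anti.injective
  -- closed range
  have hclosed : IsClosed (Set.range T) :=
    (h_anti.isClosedEmbedding T.uniformContinuous).isClosed_range
  -- range as a submodule
  set R : Submodule ℝ V := LinearMap.range (T : U →ₗ[ℝ] V) with hR
  have hRclosed : IsClosed (R : Set V) := by
    have : (R : Set V) = Set.range T := by
      ext w; simp [hR, LinearMap.mem_range]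
    rw [this]; exact hclosed
  haveI : CompleteSpace R := hRclosed.completeSpace_coe
  -- orthogonal complement is trivial
  have horth : Rᗮ = ⊥ := by
    rw [Submodule.eq_bot_iff]
    intro v hv
    have hav : ∀ u : U, a u v = 0 := by
      intro u
      have := (Submodule.mem_orthogonal R v).1 hv (T u) ⟨u, rfl⟩
      rw [← hTa u v]
      exact this
    have h0 : β * ‖v‖ ≤ 0 := by
      refine le_trans (hinfsup₂ v) (Real.iSup_le ?_ le_rfl)
      rintro ⟨u, hu⟩
      simp [hav u]
    have hv0 : ‖v‖ = 0 := by nlinarith [norm_nonneg v]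
    exact norm_eq_zero.1 hv0
  have hsurj : Function.Surjective T := by
    have hRtop : R = ⊤ := Submodule.orthogonal_eq_bot_iff.1 horth
    intro w
    have : w ∈ R := hRtop ▸ Submodule.mem_top
    exact this
  -- existence
  obtain ⟨u, hu⟩ := hsurj ((InnerProductSpace.toDual ℝ V).symm l)
  refine ⟨u, ?_, ?_⟩
  · intro v
    rw [← hTa, hu, InnerProductSpace.toDual_symm_apply]
  · intro u' hu'
    apply hinj
    apply ext_inner_right ℝ
    intro v
    rw [hTa, hTa, hu']
    rw [← hTa, hu, InnerProductSpace.toDual_symm_apply]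
end

section
/- Let U and V be real Hilbert spaces and let a : U × V → ℝ be a bounded bilinear form with |a(u,v)| ≤ M‖u‖_U‖v‖_V for all u, v. Suppose that for every bounded linear functional l : V → ℝ there exists a unique u ∈ U such that a(u,v) = l(v) for all v ∈ V. Then there exists β > 0 such that for every u ∈ U, sup over nonzero v ∈ V of a(u,v)/‖v‖_V is at least β‖u‖_U, and for every v ∈ V, sup over nonzero u ∈ U of a(u,v)/‖u‖_U is at least β‖v‖_V. (Babuška theorem, necessity direction, for problem (2.6).) -/
/-- **Babuška theorem (necessity direction).**
Let `U`, `V` be real Hilbert spaces and `a` a bounded bilinear form.  If for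
every bounded linear functional `l : V → ℝ` there is a unique `u ∈ U` with
`a u v = l v` for all `v`, then there exists `β > 0` such that both inf-sup
conditions hold with constant `β`. -/
theorem babuska_necessity
    {U V : Type*}
    [NormedAddCommGroup U] [InnerProductSpace ℝ U] [CompleteSpace U]
    [NormedAddCommGroup V] [InnerProductSpace ℝ V] [CompleteSpace V]
    (a : U →ₗ[ℝ] V →ₗ[ℝ] ℝ) (M : ℝ) (hM : 0 < M)
    (hbdd : ∀ (u : U) (v : V), |a u v| ≤ M * ‖u‖ * ‖v‖)
    (hsol : ∀ l : V →L[ℝ] ℝ, ∃! u : U, ∀ v : V, a u v = l v) :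
    ∃ β : ℝ, 0 < β ∧
      (∀ u : U,
        β * ‖u‖ ≤ ⨆ v : {v : V // v ≠ 0}, a u (v : V) / ‖(v : V)‖) ∧
      (∀ v : V,
        β * ‖v‖ ≤ ⨆ u : {u : U // u ≠ 0}, a (u : U) v / ‖(u : U)‖) := by
  -- the continuous linear operator A : U →L (V →L ℝ)
  set A : U →L[ℝ] V →L[ℝ] ℝ :=
    LinearMap.mkContinuous₂ a M (fun u v => by
      simpa [Real.norm_eq_abs] using hbdd u v) with hA
  have hAapp : ∀ u v, A u v = a u v := fun u v => rfl
  -- bijectivity of A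
  have hinj : Function.Injective A := by
    intro u₁ u₂ h
    obtain ⟨u₀, hu₀, huniq⟩ := hsol (A u₂)
    have h1 : u₁ = u₀ := huniq u₁ (fun v => by rw [← hAapp, h])
    have h2 : u₂ = u₀ := huniq u₂ (fun v => rfl)
    rw [h1, h2]
  have hsurj : Function.Surjective A := by
    intro l
    obtain ⟨u, hu, -⟩ := hsol l
    exact ⟨u, ContinuousLinearMap.ext fun v => hu v⟩
  have hker : LinearMap.ker (A : U →ₗ[ℝ] V →L[ℝ] ℝ) = ⊥ := LinearMap.ker_eq_bot.mpr hinj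
  have hrange : LinearMap.range (A : U →ₗ[ℝ] V →L[ℝ] ℝ) = ⊤ := LinearMap.range_eq_top.mpr hsurj
  let e : U ≃L[ℝ] (V →L[ℝ] ℝ) := ContinuousLinearEquiv.ofBijective A hker hrange
  have heA : ∀ u, e u = A u := fun u => rfl
  set C : ℝ := ‖(e.symm : (V →L[ℝ] ℝ) →L[ℝ] U)‖ + 1 with hC
  have hC1 : (1:ℝ) ≤ C := by
    have := norm_nonneg (e.symm : (V →L[ℝ] ℝ) →L[ℝ] U); linarith
  have hCpos : 0 < C := lt_of_lt_of_le one_pos hC1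
  have hCle : ∀ l : V →L[ℝ] ℝ, ‖e.symm l‖ ≤ C * ‖l‖ := by
    intro l
    calc ‖e.symm l‖ ≤ ‖(e.symm : (V →L[ℝ] ℝ) →L[ℝ] U)‖ * ‖l‖ :=
          (e.symm : (V →L[ℝ] ℝ) →L[ℝ] U).le_opNorm l
      _ ≤ C * ‖l‖ := by
          apply mul_le_mul_of_nonneg_right _ (norm_nonneg l)
          rw [hC]; linarith
  have hInv : ∀ u : U, ‖u‖ ≤ C * ‖A u‖ := by
    intro u
    have : e.symm (A u) = u := by rw [← heA]; exact e.symm_apply_apply u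
    calc ‖u‖ = ‖e.symm (A u)‖ := by rw [this]
      _ ≤ C * ‖A u‖ := hCle _
  refine ⟨C⁻¹, inv_pos.mpr hCpos, ?_, ?_⟩
  · -- first inf-sup condition
    intro u
    rcases isEmpty_or_nonempty {v : V // v ≠ 0} with hE | hNE
    · -- V is trivial, hence u = 0
      have hVtriv : ∀ v : V, v = 0 := by
        intro v
        by_contra hv
        exact hE.false ⟨v, hv⟩
      obtain ⟨u₀, hu₀, huniq⟩ := hsol 0
      have h1 : u = u₀ := huniq u (fun v => by rw [hVtriv v]; simp)
      have h2 : (0:U) = u₀ := huniq 0 (fun v => by simp)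
      have hu0 : u = 0 := by rw [h1, ← h2]
      simp [hu0, Real.iSup_of_isEmpty]
    · -- V has nonzero vectors
      have hbdd' : BddAbove (Set.range fun v : {v : V // v ≠ 0} =>
          a u (v : V) / ‖(v : V)‖) := by
        refine ⟨M * ‖u‖, ?_⟩
        rintro x ⟨⟨v, hv⟩, rfl⟩
        have hvpos : 0 < ‖v‖ := norm_pos_iff.mpr hv
        rw [div_le_iff₀ hvpos]
        calc a u v ≤ |a u v| := le_abs_self _
          _ ≤ M * ‖u‖ * ‖v‖ := hbdd u v
      set S : ℝ := ⨆ v : {v : V // v ≠ 0}, a u (v : V) / ‖(v : V)‖ with hS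
      have hSnonneg : 0 ≤ S := by
        obtain ⟨v, hv⟩ := hNE.some
        have hneg : (-v : V) ≠ 0 := neg_ne_zero.mpr hv
        have h1 : a u v / ‖v‖ ≤ S := le_ciSup hbdd' ⟨v, hv⟩
        have h2 : a u (-v) / ‖(-v : V)‖ ≤ S := le_ciSup hbdd' ⟨-v, hneg⟩
        have : -(a u v / ‖v‖) ≤ S := by simpa [div_neg, neg_div] using h2
        linarith
      have hAnorm : ‖A u‖ ≤ S := by
        refine ContinuousLinearMap.opNorm_le_bound _ hSnonneg ?_
        intro v
        rcases eq_or_ne v 0 with rfl | hv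
        · simp
        · have hvpos : 0 < ‖v‖ := norm_pos_iff.mpr hv
          have hneg : (-v : V) ≠ 0 := neg_ne_zero.mpr hv
          have h1 : a u v / ‖v‖ ≤ S := le_ciSup hbdd' ⟨v, hv⟩
          have h2 : a u (-v) / ‖(-v : V)‖ ≤ S := le_ciSup hbdd' ⟨-v, hneg⟩
          have h2' : -(a u v) / ‖v‖ ≤ S := by simpa using h2
          have hval : A u v = a u v := rfl
          rw [Real.norm_eq_abs, hval, abs_le]
          have H1 : a u v ≤ S * ‖v‖ := (div_le_iff₀ hvpos).mp h1
          have H2 : -(a u v) ≤ S * ‖v‖ := by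
            have := (div_le_iff₀ hvpos).mp h2'
            linarith
          constructor <;> linarith
      have := hInv u
      rw [inv_mul_le_iff₀ hCpos]
      calc ‖u‖ ≤ C * ‖A u‖ := hInv u
        _ ≤ C * S := mul_le_mul_of_nonneg_left hAnorm (le_of_lt hCpos)
  · -- second inf-sup condition
    intro v
    rcases eq_or_ne v 0 with rfl | hv
    · rcases isEmpty_or_nonempty {u : U // u ≠ 0} with hE | hNE
      · simp [Real.iSup_of_isEmpty]
      · have hbdd' : BddAbove (Set.range fun u : {u : U // u ≠ 0} =>
            a (u : U) (0:V) / ‖(u : U)‖) := by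
          refine ⟨0, ?_⟩
          rintro x ⟨⟨u, hu⟩, rfl⟩
          simp
        obtain ⟨u, hu⟩ := hNE.some
        have h1 : a u (0:V) / ‖u‖ ≤ _ := le_ciSup hbdd' ⟨u, hu⟩
        simp only [map_zero] at h1
        simpa using le_trans (by simp : (0:ℝ) ≤ a u (0:V) / ‖u‖) h1
    · -- v ≠ 0: solve with l = ⟪v, ·⟫
      set l : V →L[ℝ] ℝ := innerSL ℝ v with hl
      set u : U := e.symm l with hu
      have hul : A u = l := by rw [hu, ← heA]; exact e.apply_symm_apply l
      have hsolve : ∀ w, a u w = @inner ℝ V _ v w := fun w => by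
        rw [← hAapp, hul]; rfl
      have hvpos : 0 < ‖v‖ := norm_pos_iff.mpr hv
      have hauv : a u v = ‖v‖ ^ 2 := by
        rw [hsolve v, real_inner_self_eq_norm_sq]
      have hune : u ≠ 0 := by
        intro h0
        have hz : ‖v‖ ^ 2 = 0 := by
          rw [← hauv, h0, map_zero, LinearMap.zero_apply]
        exact (pow_ne_zero 2 (norm_ne_zero_iff.mpr hv)) hz
      have hulen : ‖u‖ ≤ C * ‖v‖ := by
        have := hCle l
        rwa [hl, innerSL_apply_norm, ← hu] at this
      have hupos : 0 < ‖u‖ := norm_pos_iff.mpr hune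
      have hbdd' : BddAbove (Set.range fun u : {u : U // u ≠ 0} =>
          a (u : U) v / ‖(u : U)‖) := by
        refine ⟨M * ‖v‖, ?_⟩
        rintro x ⟨⟨w, hw⟩, rfl⟩
        have hwpos : 0 < ‖w‖ := norm_pos_iff.mpr hw
        rw [div_le_iff₀ hwpos]
        calc a w v ≤ |a w v| := le_abs_self _
          _ ≤ M * ‖w‖ * ‖v‖ := hbdd w v
          _ = M * ‖v‖ * ‖w‖ := by ring
      have key : a u v / ‖u‖ ≤ _ := le_ciSup hbdd' ⟨u, hune⟩
      refine le_trans ?_ key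
      rw [hauv, inv_mul_le_iff₀ hCpos, ← mul_div_assoc, le_div_iff₀ hupos]
      calc ‖v‖ * ‖u‖ ≤ ‖v‖ * (C * ‖v‖) :=
            mul_le_mul_of_nonneg_left hulen (norm_nonneg v)
        _ = C * ‖v‖ ^ 2 := by ring
end

section
/- Let U and V be real Hilbert spaces, let a : U × V → ℝ be a bounded bilinear form with |a(u,v)| ≤ M‖u‖_U‖v‖_V (M > 0), let U_h ⊆ U and V_h ⊆ V be finite-dimensional subspaces, and let β_h > 0 be such that for every u_h ∈ U_h, sup over nonzero v_h ∈ V_h of a(u_h,v_h)/‖v_h‖_V is at least β_h‖u_h‖_U. Let l : V → ℝ be a bounded linear functional, let u ∈ U satisfy a(u,v) = l(v) for all v ∈ V, and let u_h ∈ U_h satisfy a(u_h,v_h) = l(v_h) for all v_h ∈ V_h. Then ‖u − u_h‖_U ≤ (1 + M/β_h) · inf_{w_h ∈ U_h} ‖u − w_h‖_U. (Theorem 2.1, quasi-optimality of the Petrov–Galerkin method.) -/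
/-- **Quasi-optimality of the Petrov–Galerkin method (Theorem 2.1).**
Under the boundedness of `a` and the discrete inf-sup condition with constant
`β_h > 0`, if `u` solves the continuous problem and `u_h ∈ U_h` solves the
discrete problem, then `‖u − u_h‖ ≤ (1 + M/β_h) · inf_{w_h ∈ U_h} ‖u − w_h‖`. -/
theorem petrov_galerkin_quasi_optimality
    {U V : Type*}
    [NormedAddCommGroup U] [InnerProductSpace ℝ U] [CompleteSpace U]
    [NormedAddCommGroup V] [InnerProductSpace ℝ V] [CompleteSpace V]
    (a : U →ₗ[ℝ] V →ₗ[ℝ] ℝ) (M : ℝ) (hM : 0 < M)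
    (hbdd : ∀ (u : U) (v : V), |a u v| ≤ M * ‖u‖ * ‖v‖)
    (Uh : Submodule ℝ U) (Vh : Submodule ℝ V)
    [FiniteDimensional ℝ Uh] [FiniteDimensional ℝ Vh]
    (βh : ℝ) (hβh : 0 < βh)
    (hinfsup : ∀ uh : Uh,
      βh * ‖(uh : U)‖ ≤
        ⨆ vh : {v : Vh // v ≠ 0}, a (uh : U) ((vh : Vh) : V) / ‖((vh : Vh) : V)‖)
    (l : V →L[ℝ] ℝ)
    (u : U) (hu : ∀ v : V, a u v = l v)
    (uh : Uh) (huh : ∀ vh : Vh, a (uh : U) (vh : V) = l (vh : V)) :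
    ‖u - (uh : U)‖ ≤ (1 + M / βh) * ⨅ wh : Uh, ‖u - (wh : U)‖ := by
  have hC : (0:ℝ) < 1 + M / βh := by positivity
  -- key pointwise bound
  have key : ∀ wh : Uh, ‖u - (uh : U)‖ ≤ (1 + M / βh) * ‖u - (wh : U)‖ := by
    intro wh
    have hsup : (⨆ vh : {v : Vh // v ≠ 0},
        a ((wh - uh : Uh) : U) ((vh : Vh) : V) / ‖((vh : Vh) : V)‖)
        ≤ M * ‖u - (wh : U)‖ := by
      by_cases hne : Nonempty {v : Vh // v ≠ 0}
      · apply ciSup_le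
        intro ⟨v, hv⟩
        have hvnorm : (0:ℝ) < ‖(v : V)‖ := by
          simpa using (norm_pos_iff.mpr (fun h => hv (by ext; simpa using h)))
        have hval : a ((wh - uh : Uh) : U) (v : V) = a ((wh : U) - u) (v : V) := by
          have h1 : a ((wh - uh : Uh) : U) (v : V)
              = a (wh : U) (v : V) - a (uh : U) (v : V) := by
            simp [LinearMap.sub_apply]
          have h2 : a ((wh : U) - u) (v : V) = a (wh : U) (v : V) - a u (v : V) := by
            simp [LinearMap.sub_apply]
          rw [h1, h2, huh v, hu (v : V)]
        rw [hval]
        rw [div_le_iff₀ hvnorm]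
        calc a ((wh : U) - u) (v : V) ≤ |a ((wh : U) - u) (v : V)| := le_abs_self _
          _ ≤ M * ‖(wh : U) - u‖ * ‖(v : V)‖ := hbdd _ _
          _ = M * ‖u - (wh : U)‖ * ‖(v : V)‖ := by rw [norm_sub_rev]
      · have : IsEmpty {v : Vh // v ≠ 0} := not_nonempty_iff.mp hne
        rw [Real.iSup_of_isEmpty]
        positivity
    have h1 : βh * ‖((wh - uh : Uh) : U)‖ ≤ M * ‖u - (wh : U)‖ :=
      le_trans (hinfsup (wh - uh)) hsup
    have h2 : ‖(wh : U) - (uh : U)‖ ≤ M / βh * ‖u - (wh : U)‖ := by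
      rw [div_mul_eq_mul_div, le_div_iff₀ hβh]
      have : ((wh - uh : Uh) : U) = (wh : U) - (uh : U) := rfl
      rw [this] at h1
      linarith
    calc ‖u - (uh : U)‖ = ‖(u - (wh : U)) + ((wh : U) - (uh : U))‖ := by rw [show u - (uh : U) = u - (wh : U) + ((wh : U) - (uh : U)) by abel]
      _ ≤ ‖u - (wh : U)‖ + ‖(wh : U) - (uh : U)‖ := norm_add_le _ _
      _ ≤ ‖u - (wh : U)‖ + M / βh * ‖u - (wh : U)‖ := by linarith
      _ = (1 + M / βh) * ‖u - (wh : U)‖ := by ring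
  rw [← div_le_iff₀' hC]
  apply le_ciInf
  intro wh
  rw [div_le_iff₀' hC]
  exact key wh
end

section
/- Let U and V be real Hilbert spaces and let a : U × V → ℝ be a bounded bilinear form. Suppose there is β > 0 such that for every u ∈ U, sup over nonzero v ∈ V of a(u,v)/‖v‖_V is at least β‖u‖_U, and suppose additionally that for every nonzero v ∈ V there exists u ∈ U with a(u,v) ≠ 0. Then for every v ∈ V, sup over nonzero u ∈ U of a(u,v)/‖u‖_U is at least β‖v‖_V; in particular the two inf-sup constants in condition (2.8) are equal. -/
open scoped RealInnerProductSpace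

/-- The operator `A : U →ₗ[ℝ] V` associated to a bounded bilinear form via Riesz
representation: `⟪A u, v⟫ = a u v`. -/
noncomputable def infsupAop
    {U V : Type*}
    [NormedAddCommGroup U] [InnerProductSpace ℝ U]
    [NormedAddCommGroup V] [InnerProductSpace ℝ V] [CompleteSpace V]
    (a : U →ₗ[ℝ] V →ₗ[ℝ] ℝ) (M : ℝ)
    (hbdd : ∀ (u : U) (v : V), |a u v| ≤ M * ‖u‖ * ‖v‖) : U →ₗ[ℝ] V where
  toFun u := (InnerProductSpace.toDual ℝ V).symm
    (LinearMap.mkContinuous (a u) (M * ‖u‖) (fun v => by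
      rw [Real.norm_eq_abs]; calc |a u v| ≤ M * ‖u‖ * ‖v‖ := hbdd u v
      _ = M * ‖u‖ * ‖v‖ := rfl))
  map_add' u u' := by
    apply ext_inner_right ℝ
    intro v
    simp [InnerProductSpace.toDual_symm_apply, inner_add_left]
  map_smul' c u := by
    apply ext_inner_right ℝ
    intro v
    simp [InnerProductSpace.toDual_symm_apply, real_inner_smul_left]

theorem infsupAop_inner
    {U V : Type*}
    [NormedAddCommGroup U] [InnerProductSpace ℝ U]
    [NormedAddCommGroup V] [InnerProductSpace ℝ V] [CompleteSpace V]
    (a : U →ₗ[ℝ] V →ₗ[ℝ] ℝ) (M : ℝ)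
    (hbdd : ∀ (u : U) (v : V), |a u v| ≤ M * ‖u‖ * ‖v‖) (u : U) (v : V) :
    ⟪infsupAop a M hbdd u, v⟫ = a u v := by
  simp [infsupAop, InnerProductSpace.toDual_symm_apply]

/-- If the first inf-sup condition holds with constant `β > 0` and `a` is
nondegenerate in its second argument, then the second inf-sup condition holds
with the same constant `β`; in particular the two inf-sup constants in
condition (2.8) are equal. -/
theorem infsup_transfer
    {U V : Type*}
    [NormedAddCommGroup U] [InnerProductSpace ℝ U] [CompleteSpace U]
    [NormedAddCommGroup V] [InnerProductSpace ℝ V] [CompleteSpace V]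
    (a : U →ₗ[ℝ] V →ₗ[ℝ] ℝ) (M : ℝ) (hM : 0 < M)
    (hbdd : ∀ (u : U) (v : V), |a u v| ≤ M * ‖u‖ * ‖v‖)
    (β : ℝ) (hβ : 0 < β)
    (hinfsup₁ : ∀ u : U,
      β * ‖u‖ ≤ ⨆ v : {v : V // v ≠ 0}, a u (v : V) / ‖(v : V)‖)
    (hnondeg : ∀ v : V, v ≠ 0 → ∃ u : U, a u v ≠ 0) :
    ∀ v : V,
      β * ‖v‖ ≤ ⨆ u : {u : U // u ≠ 0}, a (u : U) v / ‖(u : U)‖ := by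
  set A := infsupAop a M hbdd with hAdef
  have hA : ∀ u v, ⟪A u, v⟫ = a u v := infsupAop_inner a M hbdd
  -- lower bound on ‖A u‖
  have hAnorm : ∀ u : U, β * ‖u‖ ≤ ‖A u‖ := by
    intro u
    refine le_trans (hinfsup₁ u) (Real.iSup_le (fun w => ?_) (norm_nonneg _))
    rcases w with ⟨w, hw⟩
    have hwpos : 0 < ‖w‖ := norm_pos_iff.mpr hw
    rw [div_le_iff₀ hwpos, ← hA]
    exact real_inner_le_norm _ _
  -- upper bound on ‖A u‖
  have hAcont : ∀ u : U, ‖A u‖ ≤ M * ‖u‖ := by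
    intro u
    by_cases h0 : A u = 0
    · rw [h0, norm_zero]; positivity
    · have hpos : 0 < ‖A u‖ := norm_pos_iff.mpr h0
      have : ‖A u‖ * ‖A u‖ ≤ (M * ‖u‖) * ‖A u‖ := by
        calc ‖A u‖ * ‖A u‖ = ⟪A u, A u⟫ := (real_inner_self_eq_norm_mul_norm _).symm
        _ = a u (A u) := hA u (A u)
        _ ≤ |a u (A u)| := le_abs_self _
        _ ≤ M * ‖u‖ * ‖A u‖ := hbdd u (A u)
      exact le_of_mul_le_mul_right this hpos
  let Acl : U →L[ℝ] V := A.mkContinuous M hAcont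
  have hAcl : ∀ u, Acl u = A u := fun u => rfl
  have hanti : AntilipschitzWith (Real.toNNReal β⁻¹) Acl := by
    apply ContinuousLinearMap.antilipschitz_of_bound
    intro x
    rw [Real.coe_toNNReal _ (by positivity)]
    rw [hAcl, inv_mul_eq_div, le_div_iff₀ hβ, mul_comm]
    exact hAnorm x
  have hclosed : IsClosed (Set.range Acl) :=
    hanti.isClosed_range Acl.uniformContinuous
  have hrange_closed : IsClosed ((LinearMap.range A : Submodule ℝ V) : Set V) := by
    convert hclosed using 1
    ext x; simp [hAcl]
  haveI : CompleteSpace (LinearMap.range A) := hrange_closed.completeSpace_coe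
  have horth : (LinearMap.range A)ᗮ = ⊥ := by
    rw [Submodule.eq_bot_iff]
    intro w hw
    by_contra hw0
    obtain ⟨u, hu⟩ := hnondeg w hw0
    apply hu
    rw [← hA]
    have := (Submodule.mem_orthogonal _ _).mp hw (A u) (LinearMap.mem_range_self A u)
    exact this
  have hsurj : LinearMap.range A = ⊤ := Submodule.orthogonal_eq_bot_iff.mp horth
  intro v
  by_cases hv : v = 0
  · subst hv
    simp only [norm_zero, mul_zero, map_zero]
    exact Real.iSup_nonneg fun u => by positivity
  · obtain ⟨u, hu⟩ : ∃ u, A u = v := by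
      have : v ∈ LinearMap.range A := hsurj ▸ Submodule.mem_top
      exact this
    have hu0 : u ≠ 0 := by rintro rfl; simp at hu; exact hv hu.symm
    have hupos : 0 < ‖u‖ := norm_pos_iff.mpr hu0
    have hvpos : 0 < ‖v‖ := norm_pos_iff.mpr hv
    have hβu : β * ‖u‖ ≤ ‖v‖ := by rw [← hu]; exact hAnorm u
    have hav : a u v = ‖v‖ * ‖v‖ := by
      rw [← hA, hu, real_inner_self_eq_norm_mul_norm]
    have hkey : β * ‖v‖ ≤ a u v / ‖u‖ := by
      rw [hav, le_div_iff₀ hupos]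
      nlinarith
    have hbdd' : BddAbove (Set.range fun u' : {u : U // u ≠ 0} => a (u' : U) v / ‖(u' : U)‖) := by
      refine ⟨M * ‖v‖, ?_⟩
      rintro x ⟨⟨u', hu'⟩, rfl⟩
      have hu'pos : 0 < ‖u'‖ := norm_pos_iff.mpr hu'
      rw [div_le_iff₀ hu'pos]
      calc a u' v ≤ |a u' v| := le_abs_self _
        _ ≤ M * ‖u'‖ * ‖v‖ := hbdd u' v
        _ = M * ‖v‖ * ‖u'‖ := by ring
    exact le_trans hkey (le_ciSup hbdd' (⟨u, hu0⟩ : {u : U // u ≠ 0}))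
end

section
/- Let K ⊂ ℝ^d be a compact set, let f : K → ℝ be continuous, and let ε > 0. Then there exist n ∈ ℕ, coefficients a_1, …, a_n ∈ ℝ, weight vectors w_1, …, w_n ∈ ℝ^d, and biases b_1, …, b_n ∈ ℝ such that sup_{x ∈ K} |f(x) − Σ_{i=1}^n a_i · tanh(⟨w_i, x⟩ + b_i)| < ε. (Universal approximation of continuous functions on a compact domain by shallow neural networks with the non-polynomial activation function tanh, as used in the construction of the DPGM trial space.) -/
open scoped RealInnerProductSpace

lemma exp_sub_tanh (c t : ℝ) :
    Real.exp c / 2 * (1 - Real.tanh ((c - t)/2)) = Real.exp t / (1 + Real.exp (t - c)) := by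
  rw [Real.tanh_eq_sinh_div_cosh, Real.sinh_eq, Real.cosh_eq]
  set u := Real.exp ((c - t)/2) with hu
  have hupos : 0 < u := Real.exp_pos _
  have e1 : Real.exp (-((c - t)/2)) = u⁻¹ := by rw [Real.exp_neg]
  have e2 : Real.exp (t - c) = u⁻¹ * u⁻¹ := by
    rw [hu, ← Real.exp_neg, ← Real.exp_add]; congr 1; ring
  have e3 : Real.exp c = Real.exp t * (u * u) := by
    rw [hu, ← Real.exp_add, ← Real.exp_add]; congr 1; ring
  rw [e1, e2, e3]
  have h2 : 0 < 1 + u⁻¹ * u⁻¹ := by positivity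
  field_simp
  ring

lemma exp_tanh_err (c t : ℝ) :
    |Real.exp t - Real.exp c / 2 * (1 - Real.tanh ((c - t)/2))| ≤ Real.exp (2*t - c) := by
  rw [exp_sub_tanh]
  have h2 : 0 < 1 + Real.exp (t - c) := by positivity
  have key : Real.exp t - Real.exp t / (1 + Real.exp (t - c))
      = Real.exp t * Real.exp (t - c) / (1 + Real.exp (t - c)) := by
    field_simp
    ring
  rw [key, abs_of_nonneg (by positivity)]
  calc Real.exp t * Real.exp (t - c) / (1 + Real.exp (t - c))
      ≤ Real.exp t * Real.exp (t - c) / 1 := by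
        apply div_le_div_of_nonneg_left (by positivity) one_pos (by linarith [Real.exp_pos (t-c)])
    _ = Real.exp (2*t - c) := by rw [div_one, ← Real.exp_add]; congr 1; ring

/-- **Universal approximation by shallow tanh networks.**
Every continuous function on a compact set `K ⊂ ℝ^d` can be uniformly
approximated, to within any `ε > 0`, by a two-layer neural network
`x ↦ ∑ i, a i * tanh (⟪w i, x⟫ + b i)` with activation `tanh`. -/
theorem universal_approximation_tanh
    {d : ℕ} (K : Set (EuclideanSpace ℝ (Fin d))) (hK : IsCompact K)
    (f : EuclideanSpace ℝ (Fin d) → ℝ) (hf : ContinuousOn f K)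
    (ε : ℝ) (hε : 0 < ε) :
    ∃ (n : ℕ) (a : Fin n → ℝ) (w : Fin n → EuclideanSpace ℝ (Fin d))
      (b : Fin n → ℝ),
      ∀ x ∈ K, |f x - ∑ i, a i * Real.tanh (⟪w i, x⟫ + b i)| < ε := by
  haveI : CompactSpace K := isCompact_iff_compactSpace.mp hK
  -- the exponential functions on K
  set E : EuclideanSpace ℝ (Fin d) → C(K, ℝ) := fun w =>
    ⟨fun x => Real.exp ⟪w, (x : EuclideanSpace ℝ (Fin d))⟫,
      Real.continuous_exp.comp (continuous_const.inner continuous_subtype_val)⟩ with hE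
  set p : Submodule ℝ C(K, ℝ) := Submodule.span ℝ (Set.range E) with hp
  have hEmem : ∀ w, E w ∈ p := fun w => Submodule.subset_span ⟨w, rfl⟩
  have hmulE : ∀ w₁ w₂, E w₁ * E w₂ = E (w₁ + w₂) := by
    intro w₁ w₂; ext x
    simp only [hE, ContinuousMap.mul_apply, ContinuousMap.coe_mk]
    rw [← Real.exp_add, ← inner_add_left]
  have h_one : (1 : C(K, ℝ)) ∈ p := by
    have : E 0 = 1 := by ext x; simp [hE]
    rw [← this]; exact hEmem 0
  have h_mul_gen : ∀ w, ∀ y ∈ p, E w * y ∈ p := by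
    intro w y hy
    induction hy using Submodule.span_induction with
    | mem z hz => obtain ⟨w', rfl⟩ := hz; rw [hmulE]; exact hEmem _
    | zero => rw [mul_zero]; exact p.zero_mem
    | add a b _ _ ha hb => rw [mul_add]; exact p.add_mem ha hb
    | smul r a _ ha => rw [mul_smul_comm]; exact p.smul_mem r ha
  have h_mul : ∀ x y : C(K, ℝ), x ∈ p → y ∈ p → x * y ∈ p := by
    intro x y hx hy
    induction hx using Submodule.span_induction with
    | mem z hz => obtain ⟨w', rfl⟩ := hz; exact h_mul_gen _ _ hy
    | zero => rw [zero_mul]; exact p.zero_mem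
    | add a b _ _ ha hb => rw [add_mul]; exact p.add_mem ha hb
    | smul r a _ ha => rw [smul_mul_assoc]; exact p.smul_mem r ha
  set A : Subalgebra ℝ C(K, ℝ) := p.toSubalgebra h_one h_mul with hA
  have hsep : A.SeparatesPoints := by
    intro x y hxy
    have hxy' : (x : EuclideanSpace ℝ (Fin d)) ≠ y := Subtype.coe_ne_coe.mpr hxy
    refine ⟨_, ⟨E ((x : EuclideanSpace ℝ (Fin d)) - y), hEmem _, rfl⟩, ?_⟩
    simp only [hE, ContinuousMap.coe_mk]
    intro h
    have h2 := Real.exp_injective h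
    rw [inner_sub_left, inner_sub_left] at h2
    have h3 : ⟪(x : EuclideanSpace ℝ (Fin d)) - y, (x : EuclideanSpace ℝ (Fin d)) - y⟫ = 0 := by
      rw [inner_sub_right]; rw [inner_sub_left, inner_sub_left]
      have := real_inner_comm (x : EuclideanSpace ℝ (Fin d)) y
      linarith [h2]
    exact hxy' (sub_eq_zero.mp (inner_self_eq_zero.mp h3))
  obtain ⟨⟨g, hg⟩, hgf⟩ := ContinuousMap.exists_mem_subalgebra_near_continuous_of_separatesPoints
    A hsep (K.restrict f) hf.restrict (ε/2) (by linarith)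
  rw [hA, Submodule.mem_toSubalgebra] at hg
  obtain ⟨m, cs, vs, hsum⟩ := Submodule.mem_span_set'.mp hg
  choose ws hws using fun j => (vs j).2
  -- pointwise formula for g
  have hgx : ∀ x : K, g x = ∑ j, cs j * Real.exp ⟪ws j, (x : EuclideanSpace ℝ (Fin d))⟫ := by
    intro x
    rw [← hsum]
    rw [ContinuousMap.sum_apply]
    refine Finset.sum_congr rfl fun j _ => ?_
    rw [ContinuousMap.smul_apply, ← hws j]
    simp [hE, smul_eq_mul]
  -- bounds
  obtain ⟨R, hR⟩ := hK.isBounded.subset_closedBall 0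
  set M : ℝ := (∑ j, ‖ws j‖) * max R 0 with hM
  have hMb : ∀ (j : Fin m) (x : EuclideanSpace ℝ (Fin d)), x ∈ K → |⟪ws j, x⟫| ≤ M := by
    intro j x hx
    calc |⟪ws j, x⟫| ≤ ‖ws j‖ * ‖x‖ := abs_real_inner_le_norm _ _
      _ ≤ (∑ i, ‖ws i‖) * max R 0 := by
          apply mul_le_mul
          · exact Finset.single_le_sum (fun i _ => norm_nonneg (ws i)) (Finset.mem_univ j)
          · have := hR hx
            rw [Metric.mem_closedBall, dist_zero_right] at this
            exact le_trans this (le_max_left _ _)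
          · exact norm_nonneg x
          · exact Finset.sum_nonneg fun i _ => norm_nonneg (ws i)
  set S : ℝ := ∑ j, |cs j| with hS
  have hSnn : 0 ≤ S := Finset.sum_nonneg fun i _ => abs_nonneg _
  set c0 : ℝ := 2*M - Real.log (ε/(4*(S+1))) with hc0
  have hexpc0 : Real.exp (2*M - c0) = ε/(4*(S+1)) := by
    rw [hc0]; ring_nf
    rw [Real.exp_log (by positivity)]
  have htanh1 : Real.tanh 1 ≠ 0 := by
    rw [Real.tanh_eq_sinh_div_cosh]
    exact ne_of_gt (div_pos (by rw [Real.sinh_pos_iff]; norm_num) (Real.cosh_pos 1))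
  refine ⟨m + m,
    Sum.elim (fun j => -(cs j * Real.exp c0 / 2))
      (fun j => cs j * Real.exp c0 / (2 * Real.tanh 1)) ∘ finSumFinEquiv.symm,
    Sum.elim (fun j => (-(1/2) : ℝ) • ws j) (fun _ => 0) ∘ finSumFinEquiv.symm,
    Sum.elim (fun _ => c0/2) (fun _ => (1:ℝ)) ∘ finSumFinEquiv.symm, ?_⟩
  intro x hx
  -- compute the network sum
  have hnet : ∑ i : Fin (m + m),
      (Sum.elim (fun j => -(cs j * Real.exp c0 / 2))
        (fun j => cs j * Real.exp c0 / (2 * Real.tanh 1)) ∘ finSumFinEquiv.symm) i *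
        Real.tanh (⟪(Sum.elim (fun j => (-(1/2) : ℝ) • ws j) (fun _ => 0) ∘ finSumFinEquiv.symm) i, x⟫
          + (Sum.elim (fun _ => c0/2) (fun _ => (1:ℝ)) ∘ finSumFinEquiv.symm) i)
      = ∑ j : Fin m, cs j * (Real.exp c0 / 2 * (1 - Real.tanh ((c0 - ⟪ws j, x⟫)/2))) := by
    rw [← Equiv.sum_comp finSumFinEquiv]
    simp only [Function.comp_apply, Equiv.symm_apply_apply]
    rw [Fintype.sum_sum_type]
    simp only [Sum.elim_inl, Sum.elim_inr]
    rw [← Finset.sum_add_distrib]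
    refine Finset.sum_congr rfl fun j _ => ?_
    rw [real_inner_smul_left, inner_zero_left, zero_add]
    have harg : -(1/2) * ⟪ws j, x⟫ + c0/2 = (c0 - ⟪ws j, x⟫)/2 := by ring
    rw [harg]
    field_simp
    ring
  rw [hnet]
  -- error estimate
  have h1 : |f x - g ⟨x, hx⟩| < ε/2 := by
    have := hgf ⟨x, hx⟩
    rw [Real.norm_eq_abs] at this
    rw [abs_sub_comm]
    exact this
  have h2 : |g ⟨x, hx⟩ - ∑ j : Fin m, cs j * (Real.exp c0 / 2 * (1 - Real.tanh ((c0 - ⟪ws j, x⟫)/2)))| < ε/2 := by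
    rw [hgx ⟨x, hx⟩]
    simp only
    rw [← Finset.sum_sub_distrib]
    calc |∑ j : Fin m, (cs j * Real.exp ⟪ws j, x⟫
            - cs j * (Real.exp c0 / 2 * (1 - Real.tanh ((c0 - ⟪ws j, x⟫)/2))))|
        ≤ ∑ j : Fin m, |cs j * Real.exp ⟪ws j, x⟫
            - cs j * (Real.exp c0 / 2 * (1 - Real.tanh ((c0 - ⟪ws j, x⟫)/2)))| :=
          Finset.abs_sum_le_sum_abs _ _
      _ ≤ ∑ j : Fin m, |cs j| * Real.exp (2*M - c0) := by
          refine Finset.sum_le_sum fun j _ => ?_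
          rw [← mul_sub, abs_mul]
          refine mul_le_mul_of_nonneg_left ?_ (abs_nonneg _)
          refine le_trans (exp_tanh_err c0 ⟪ws j, x⟫) ?_
          apply Real.exp_le_exp.mpr
          have := hMb j x hx
          have := abs_le.mp this
          linarith [this.1, this.2]
      _ = S * (ε/(4*(S+1))) := by rw [← Finset.sum_mul, hexpc0]
      _ < ε/2 := by
          rw [mul_comm, div_mul_eq_mul_div, div_lt_iff₀ (by positivity)]
          nlinarith
  calc |f x - ∑ j : Fin m, cs j * (Real.exp c0 / 2 * (1 - Real.tanh ((c0 - ⟪ws j, x⟫)/2)))|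
      ≤ |f x - g ⟨x, hx⟩| + |g ⟨x, hx⟩ - ∑ j : Fin m, cs j * (Real.exp c0 / 2 * (1 - Real.tanh ((c0 - ⟪ws j, x⟫)/2)))| := abs_sub_le _ _ _
    _ < ε/2 + ε/2 := add_lt_add h1 h2
    _ = ε := by ring
end
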